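/- Let D ⊆ ℝ^d, F : D → ℝ, a : ℝ → ℝ^d, and let E ⊆ D be a nonempty compact set with M = max over e' ∈ E of ‖e'‖. Let ε₀ ≥ 0, ε₁ ≥ 0, and assume there exists Φ > 0 such that for all e, e' ∈ E with F(e') > F(e) one has F(e') − F(e) ≤ Φ·⟨a(F(e')), e − e'⟩. Let e⋆ ∈ E maximize F over E and set a⋆ = a(F(e⋆)). Suppose â ∈ ℝ^d and e ∈ E satisfy: (i) ‖â − a⋆‖ ≤ ε₀, and (ii) ⟨â, e⟩ ≤ min over e' ∈ E of ⟨â, e'⟩ + ε₁. Then F(e) ≥ F(e⋆) − Φ·(2ε₀M + ε₁). -/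
import Mathlib


open RealInnerProductSpace

/-- Approximation guarantee: if costs `â` are `ε₀`-close to the optimal costs
`a (F e⋆)` and `e ∈ E` is an `ε₁`-approximate minimizer of the cost-sensitive
objective `⟪â, ·⟫` over `E`, then `F e ≥ F e⋆ − Φ (2 ε₀ M + ε₁)`, where `M` is the
maximum norm over `E` and `Φ` satisfies
`F e' − F e ≤ Φ ⟪a (F e'), e − e'⟫` whenever `F e' > F e`. -/
theorem approx_cost_approx_Fmeasure {d : ℕ}
    (D E : Set (EuclideanSpace ℝ (Fin d))) (hED : E ⊆ D)
    (F : EuclideanSpace ℝ (Fin d) → ℝ) (a : ℝ → EuclideanSpace ℝ (Fin d))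
    (hEne : E.Nonempty) (hEcomp : IsCompact E)
    (M : ℝ) (hM : IsGreatest ((fun e' => ‖e'‖) '' E) M)
    (ε₀ ε₁ : ℝ) (hε₀ : 0 ≤ ε₀) (hε₁ : 0 ≤ ε₁)
    (Φ : ℝ) (hΦ : 0 < Φ)
    (hkey : ∀ e ∈ E, ∀ e' ∈ E, F e' > F e → F e' - F e ≤ Φ * ⟪a (F e'), e - e'⟫)
    (estar : EuclideanSpace ℝ (Fin d)) (hestarE : estar ∈ E)
    (hmax : ∀ e' ∈ E, F e' ≤ F estar)
    (ahat : EuclideanSpace ℝ (Fin d)) (e : EuclideanSpace ℝ (Fin d)) (he : e ∈ E)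
    (h1 : ‖ahat - a (F estar)‖ ≤ ε₀)
    (h2 : ∀ e' ∈ E, ⟪ahat, e⟫ ≤ ⟪ahat, e'⟫ + ε₁) :
    F e ≥ F estar - Φ * (2 * ε₀ * M + ε₁) := by

  have hMnorm : ∀ x ∈ E, ‖x‖ ≤ M := fun x hx => hM.2 ⟨x, hx, rfl⟩
  have hM0 : 0 ≤ M := le_trans (norm_nonneg e) (hMnorm e he)
  rcases le_or_gt (F estar) (F e) with h | h
  · have : 0 ≤ Φ * (2 * ε₀ * M + ε₁) := by positivity
    linarith
  · have hkey' := hkey e he estar hestarE h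
    have hsplit : ⟪a (F estar), e - estar⟫ =
        ⟪ahat, e⟫ - ⟪ahat, estar⟫ + ⟪a (F estar) - ahat, e - estar⟫ := by
      simp [inner_sub_left, inner_sub_right]; ring
    have hb1 : ⟪ahat, e⟫ - ⟪ahat, estar⟫ ≤ ε₁ := by
      have := h2 estar hestarE; linarith
    have hb2 : ⟪a (F estar) - ahat, e - estar⟫ ≤ 2 * ε₀ * M := by
      calc ⟪a (F estar) - ahat, e - estar⟫ ≤ ‖a (F estar) - ahat‖ * ‖e - estar‖ :=
            real_inner_le_norm _ _
        _ ≤ ε₀ * (2 * M) := by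
            have hn : ‖a (F estar) - ahat‖ ≤ ε₀ := by rwa [norm_sub_rev] at h1
            have hd : ‖e - estar‖ ≤ 2 * M := by
              have := norm_sub_le e estar
              have h1' := hMnorm e he
              have h2' := hMnorm estar hestarE
              linarith
            exact mul_le_mul hn hd (norm_nonneg _) hε₀
        _ = 2 * ε₀ * M := by ring
    have : F estar - F e ≤ Φ * (2 * ε₀ * M + ε₁) := by
      calc F estar - F e ≤ Φ * ⟪a (F estar), e - estar⟫ := hkey'
        _ ≤ Φ * (2 * ε₀ * M + ε₁) := by
            rw [hsplit]; nlinarith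
    linarith
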